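/- For σ > 1/2 there exists C_σ > 0 such that for all v ∈ H^{σ+1}(T) and f ∈ L²(T), ‖[H; v]∂_x f‖_{L²(T)} ≤ C_σ ‖v_x‖_{H^σ(T)} ‖f‖_{L²(T)}, where [H;v]∂_x f := H[v f_x] - v·H[f_x]. -/

import Mathlib

open scoped Real

noncomputable section

/-- The Japanese-bracket power `⟨k⟩ˢ = (1 + |k|²)^{s/2}`. -/
def japow (k : ℤ) (s : ℝ) : ℝ := (1 + (k : ℝ) ^ 2) ^ (s / 2)

/-- The squared `Hˢ(𝕋)` norm of a periodic function described by its sequence of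
Fourier coefficients `c`: `‖f‖²_{Hˢ} = 2π·Σ_k ⟨k⟩^{2s}|f^(k)|²`. -/
def hsNormSq (s : ℝ) (c : ℤ → ℂ) : ℝ := 2 * Real.pi * ∑' k : ℤ, japow k (2 * s) * ‖c k‖ ^ 2

/-- The `Hˢ(𝕋)` norm in terms of Fourier coefficients. -/
def hsNorm (s : ℝ) (c : ℤ → ℂ) : ℝ := Real.sqrt (hsNormSq s c)

/-- Membership in the Sobolev space `Hˢ(𝕋)`, in terms of Fourier coefficients. -/
def MemHs (s : ℝ) (c : ℤ → ℂ) : Prop := Summable fun k : ℤ => japow k (2 * s) * ‖c k‖ ^ 2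

/-- The discrete Hilbert transform on the Fourier side: `(H[f])^(k) = -i·sgn(k)·f^(k)`. -/
def hilbC (c : ℤ → ℂ) : ℤ → ℂ := fun k => -Complex.I * (Int.sign k : ℤ) * c k

/-- The `x`-derivative on the Fourier side: `(∂ₓf)^(k) = i·k·f^(k)`. -/
def derC (c : ℤ → ℂ) : ℤ → ℂ := fun k => Complex.I * (k : ℂ) * c k

/-- The pointwise product of two periodic functions on the Fourier side
(discrete convolution of the coefficients). -/
def convC (a b : ℤ → ℂ) : ℤ → ℂ := fun k => ∑' ℓ : ℤ, a (k - ℓ) * b ℓ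

/-- The commutator `[H; v]f = H[v·f] - v·H[f]` on the Fourier side. -/
def commH (v f : ℤ → ℂ) : ℤ → ℂ := fun k => hilbC (convC v f) k - convC v (hilbC f) k

/-! ### Auxiliary lemmas -/

lemma sign_abs_bound (k l : ℤ) : (Int.sign k - Int.sign l).natAbs * l.natAbs ≤ 2 * (k - l).natAbs := by
  rcases lt_trichotomy k 0 with hk|hk|hk <;> rcases lt_trichotomy l 0 with hl|hl|hl <;>
    simp only [Int.sign_eq_one_iff_pos.mpr, Int.sign_eq_neg_one_iff_neg.mpr, hk, hl,
      Int.sign_zero] <;> norm_num <;> omega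

lemma intAbs_cast (n : ℤ) : |(n : ℝ)| = (n.natAbs : ℝ) := by simp [Nat.cast_natAbs]

lemma sign_abs_bound_real (k l : ℤ) :
    |((Int.sign k - Int.sign l : ℤ) : ℝ)| * |(l : ℝ)| ≤ 2 * |((k - l : ℤ) : ℝ)| := by
  have h := sign_abs_bound k l
  rw [intAbs_cast, intAbs_cast, intAbs_cast]
  exact_mod_cast h

lemma japow_pos (k : ℤ) (s : ℝ) : 0 < japow k s :=
  Real.rpow_pos_of_pos (by positivity) _

lemma japow_nonneg (k : ℤ) (s : ℝ) : 0 ≤ japow k s := (japow_pos k s).le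

lemma japow_zero (k : ℤ) : japow k 0 = 1 := by simp [japow]

lemma japow_add (k : ℤ) (a b : ℝ) : japow k a * japow k b = japow k (a + b) := by
  rw [japow, japow, japow, ← Real.rpow_add (by positivity)]
  ring_nf

lemma japow_sq (k : ℤ) (s : ℝ) : japow k s ^ 2 = japow k (2 * s) := by
  rw [japow, japow, ← Real.rpow_natCast ((1 + (k:ℝ)^2) ^ (s/2)) 2, ← Real.rpow_mul (by positivity)]
  congr 1
  ring

lemma one_le_japow (k : ℤ) {s : ℝ} (hs : 0 ≤ s) : 1 ≤ japow k s := by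
  rw [japow]
  nth_rewrite 1 [← Real.one_rpow (s/2)]
  exact Real.rpow_le_rpow zero_le_one (by nlinarith [sq_nonneg ((k:ℝ))]) (by linarith)

lemma japow_le_japow (k : ℤ) {a b : ℝ} (hab : a ≤ b) : japow k a ≤ japow k b :=
  Real.rpow_le_rpow_of_exponent_le (by nlinarith [sq_nonneg ((k:ℝ))]) (by linarith)

lemma sq_le_japow_two (k : ℤ) : (k : ℝ) ^ 2 ≤ japow k 2 := by
  have : japow k 2 = 1 + (k:ℝ)^2 := by
    rw [japow]
    norm_num
  rw [this]
  linarith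

/-- Summability of `⟨k⟩^{-2σ}` for `σ > 1/2`. -/
lemma summable_japow_neg {σ : ℝ} (hσ : 1 / 2 < σ) :
    Summable fun k : ℤ => japow k (-(2 * σ)) := by
  have h2σ : 1 < 2 * σ := by linarith
  refine Summable.of_nonneg_of_le
    (f := fun k : ℤ => |(k : ℝ)| ^ (-(2 * σ)) + if k = 0 then 1 else 0)
    (fun k => japow_nonneg _ _) (fun k => ?_) ?_
  · by_cases hk : k = 0
    · subst hk
      simp only []
      rw [if_pos trivial]
      have h0 : japow 0 (-(2*σ)) = 1 := by simp [japow]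
      have hz : |((0:ℤ):ℝ)| ^ (-(2 * σ)) = 0 := by
        rw [Int.cast_zero, abs_zero, Real.zero_rpow (by linarith)]
      rw [h0, hz]
      norm_num
    · rw [if_neg hk]
      have hk0 : (0:ℝ) < (k:ℝ)^2 := by
        have : (k:ℝ) ≠ 0 := Int.cast_ne_zero.mpr hk
        positivity
      have h1 : japow k (-(2*σ)) ≤ ((k:ℝ)^2) ^ (-(2*σ)/2) := by
        rw [japow]
        exact Real.rpow_le_rpow_of_nonpos hk0 (by linarith) (by linarith)
      have h2 : ((k:ℝ)^2) ^ (-(2*σ)/2) = |(k:ℝ)| ^ (-(2*σ)) := by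
        rw [← sq_abs, ← Real.rpow_natCast |(k:ℝ)| 2, ← Real.rpow_mul (abs_nonneg _)]
        congr 1
        push_cast
        ring
      rw [h2] at h1
      linarith
  · exact (Real.summable_abs_int_rpow h2σ).add
      (summable_of_ne_finset_zero (s := {(0:ℤ)}) (fun k hk => by
        simp only [Finset.mem_singleton] at hk
        simp [hk]))

/-- Product of two `ℓ²` sequences is `ℓ¹`. -/
lemma l2_mul_summable {g h : ℤ → ℝ} (hg : Summable fun k => g k ^ 2)
    (hh : Summable fun k => h k ^ 2) : Summable fun k => |g k| * |h k| := by
  refine Summable.of_nonneg_of_le (fun k => by positivity) (fun k => ?_)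
    ((hg.add hh).div_const 2)
  have := sq_nonneg (|g k| - |h k|)
  have e1 : |g k|^2 = g k ^2 := sq_abs _
  have e2 : |h k|^2 = h k ^2 := sq_abs _
  nlinarith

lemma norm_derC (c : ℤ → ℂ) (k : ℤ) : ‖derC c k‖ = |(k : ℝ)| * ‖c k‖ := by
  rw [derC, norm_mul, norm_mul, Complex.norm_I, one_mul, Complex.norm_intCast]

lemma norm_int_cast_complex (n : ℤ) : ‖((n : ℤ) : ℂ)‖ = |(n : ℝ)| := Complex.norm_intCast n

lemma normI_sign_le (k : ℤ) : ‖-Complex.I * ((Int.sign k : ℤ) : ℂ)‖ ≤ 1 := by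
  rw [norm_mul, norm_neg, Complex.norm_I, one_mul, norm_int_cast_complex, intAbs_cast]
  have : (Int.sign k).natAbs ≤ 1 := by
    rcases lt_trichotomy k 0 with h|h|h <;>
      simp [Int.sign_eq_one_iff_pos.mpr, Int.sign_eq_neg_one_iff_neg.mpr, h, Int.sign_zero]
  exact_mod_cast this

lemma sq_half_ennreal (z : ENNReal) : (z ^ ((1:ℝ)/2)) ^ (2:ℕ) = z := by
  rw [← ENNReal.rpow_natCast (z ^ ((1:ℝ)/2)) 2, ← ENNReal.rpow_mul]
  norm_num

open MeasureTheory in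
theorem cs_ennreal (x y : ℤ → ENNReal) :
    ∑' k, x k * y k ≤ (∑' k, (x k)^2)^((1:ℝ)/2) * (∑' k, (y k)^2)^((1:ℝ)/2) := by
  have h := ENNReal.lintegral_mul_le_Lp_mul_Lq (Measure.count (α := ℤ))
    (Real.HolderTriple.mk (p:=2) (q:=2) (r:=1) (by norm_num) (by norm_num) (by norm_num))
    (measurable_of_countable x).aemeasurable (measurable_of_countable y).aemeasurable
  rw [lintegral_count, lintegral_count, lintegral_count] at h
  simp only [Pi.mul_apply] at h
  convert h using 3 <;> exact tsum_congr fun a => by rw [← ENNReal.rpow_natCast]; norm_num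

/-- Squared Cauchy–Schwarz in `ℝ≥0∞`. -/
theorem cs_ennreal_sq (x y : ℤ → ENNReal) :
    (∑' k, x k * y k) ^ (2:ℕ) ≤ (∑' k, (x k)^2) * (∑' k, (y k)^2) := by
  calc (∑' k, x k * y k) ^ (2:ℕ)
      ≤ ((∑' k, (x k)^2)^((1:ℝ)/2) * (∑' k, (y k)^2)^((1:ℝ)/2)) ^ (2:ℕ) := by
        exact pow_le_pow_left₀ zero_le (cs_ennreal x y) 2
    _ = (∑' k, (x k)^2) * (∑' k, (y k)^2) := by
        rw [mul_pow, sq_half_ennreal, sq_half_ennreal]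

/-- For `σ > 1/2` there is `C > 0` such that for all `v ∈ H^(σ+1)` and
`f ∈ L²`, `‖[H; v]∂ₓf‖_{L²} ≤ C * ‖vₓ‖_{H^σ} * ‖f‖_{L²}`. -/
theorem stmt_9 (σ : ℝ) (hσ : 1 / 2 < σ) :
    ∃ C > (0 : ℝ), ∀ v f : ℤ → ℂ, MemHs (σ + 1) v → MemHs 0 f →
      hsNorm 0 (commH v (derC f)) ≤ C * hsNorm σ (derC v) * hsNorm 0 f := by
  have hσ0 : (0:ℝ) ≤ σ := by linarith
  have hSsum : Summable fun k : ℤ => japow k (-(2 * σ)) := summable_japow_neg hσ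
  set Sr : ℝ := ∑' k : ℤ, japow k (-(2 * σ)) with hSrdef
  have hSr0 : 0 ≤ Sr := tsum_nonneg fun k => japow_nonneg _ _
  refine ⟨2 * Real.sqrt Sr + 1, by positivity, ?_⟩
  intro v f hv hf
  -- Basic real summability facts
  have hf2 : Summable fun k : ℤ => ‖f k‖ ^ 2 := by
    have := hf
    unfold MemHs at this
    refine this.congr fun k => ?_
    rw [show (2:ℝ) * 0 = 0 by ring, japow_zero, one_mul]
  have hv2 : Summable fun k : ℤ => ‖v k‖ ^ 2 := by
    refine Summable.of_nonneg_of_le (fun k => by positivity) (fun k => ?_) hv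
    have h1 : 1 ≤ japow k (2 * (σ + 1)) := one_le_japow k (by linarith)
    nlinarith [sq_nonneg ‖v k‖]
  have hA2 : Summable fun k : ℤ => ‖derC v k‖ ^ 2 := by
    refine Summable.of_nonneg_of_le (fun k => by positivity) (fun k => ?_) hv
    rw [norm_derC, mul_pow, sq_abs]
    have h1 : (k:ℝ)^2 ≤ japow k 2 := sq_le_japow_two k
    have h2 : japow k 2 ≤ japow k (2 * (σ + 1)) := japow_le_japow k (by linarith)
    nlinarith [sq_nonneg ‖v k‖, japow_nonneg k 2]
  have hAσ : Summable fun k : ℤ => japow k (2 * σ) * ‖derC v k‖ ^ 2 := by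
    refine Summable.of_nonneg_of_le
      (fun k => mul_nonneg (japow_nonneg _ _) (sq_nonneg _)) (fun k => ?_) hv
    rw [norm_derC, mul_pow, sq_abs]
    have h1 : (k:ℝ)^2 ≤ japow k 2 := sq_le_japow_two k
    have h3 : japow k (2*σ) * japow k 2 = japow k (2 * (σ+1)) := by
      rw [japow_add]; ring_nf
    calc japow k (2*σ) * ((k:ℝ)^2 * ‖v k‖^2)
        = (japow k (2*σ) * (k:ℝ)^2) * ‖v k‖^2 := by ring
      _ ≤ (japow k (2*σ) * japow k 2) * ‖v k‖^2 :=
          mul_le_mul_of_nonneg_right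
            (mul_le_mul_of_nonneg_left h1 (japow_nonneg _ _)) (sq_nonneg _)
      _ = japow k (2 * (σ+1)) * ‖v k‖^2 := by rw [h3]
  set Xr : ℝ := ∑' k : ℤ, japow k (2 * σ) * ‖derC v k‖ ^ 2 with hXrdef
  set Yr : ℝ := ∑' k : ℤ, ‖f k‖ ^ 2 with hYrdef
  have hXr0 : 0 ≤ Xr := tsum_nonneg fun k => mul_nonneg (japow_nonneg _ _) (sq_nonneg _)
  have hYr0 : 0 ≤ Yr := tsum_nonneg fun k => by positivity
  -- convolution-type summability at fixed k
  have habs : ∀ k ℓ : ℤ, |(ℓ:ℝ)| ≤ |((k - ℓ : ℤ):ℝ)| + |(k:ℝ)| := by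
    intro k ℓ
    rw [intAbs_cast, intAbs_cast, intAbs_cast]
    have : ℓ.natAbs ≤ (k - ℓ).natAbs + k.natAbs := by omega
    exact_mod_cast this
  have hsub_inj : ∀ k : ℤ, Function.Injective fun ℓ : ℤ => k - ℓ := by
    intro k x y hxy
    simp only at hxy
    omega
  have hAcomp : ∀ k : ℤ, Summable fun ℓ : ℤ => ‖derC v (k - ℓ)‖ ^ 2 := fun k =>
    hA2.comp_injective (hsub_inj k)
  have hvcomp : ∀ k : ℤ, Summable fun ℓ : ℤ => ‖v (k - ℓ)‖ ^ 2 := fun k =>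
    hv2.comp_injective (hsub_inj k)
  -- the ℓ¹ dominating sequence at fixed k
  have hDsum : ∀ k : ℤ, Summable fun ℓ : ℤ => ‖derC v (k - ℓ)‖ * ‖f ℓ‖ := by
    intro k
    have := l2_mul_summable (hAcomp k) hf2
    refine this.congr fun ℓ => ?_
    rw [abs_of_nonneg (norm_nonneg _), abs_of_nonneg (norm_nonneg _)]
  have hS0 : ∀ k : ℤ, Summable fun ℓ : ℤ => |(ℓ:ℝ)| * (‖v (k - ℓ)‖ * ‖f ℓ‖) := by
    intro k
    refine Summable.of_nonneg_of_le
      (f := fun ℓ : ℤ => ‖derC v (k - ℓ)‖ * ‖f ℓ‖ + |(k:ℝ)| * (‖v (k - ℓ)‖ * ‖f ℓ‖))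
      (fun ℓ => by positivity) (fun ℓ => ?_) ?_
    · have h1 := habs k ℓ
      rw [norm_derC]
      have h2 : (0:ℝ) ≤ ‖v (k - ℓ)‖ * ‖f ℓ‖ := by positivity
      nlinarith
    · refine (hDsum k).add ?_
      have := (l2_mul_summable (hvcomp k) hf2).mul_left |(k:ℝ)|
      refine this.congr fun ℓ => ?_
      rw [abs_of_nonneg (norm_nonneg _), abs_of_nonneg (norm_nonneg _)]
  -- the commutator identity
  have hkey : ∀ k : ℤ, commH v (derC f) k
      = ∑' ℓ : ℤ, (-Complex.I) * ((Int.sign k - Int.sign ℓ : ℤ) : ℂ) * (v (k - ℓ) * derC f ℓ) := by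
    intro k
    have hsum1 : Summable fun ℓ : ℤ => (-Complex.I * ((Int.sign k : ℤ) : ℂ)) * (v (k - ℓ) * derC f ℓ) := by
      refine Summable.of_norm ?_
      refine Summable.of_nonneg_of_le (fun ℓ => norm_nonneg _) (fun ℓ => ?_) (hS0 k)
      have e : ‖v (k - ℓ) * derC f ℓ‖ = |(ℓ:ℝ)| * (‖v (k - ℓ)‖ * ‖f ℓ‖) := by
        rw [norm_mul, norm_derC]; ring
      rw [norm_mul, e]
      exact mul_le_of_le_one_left (by positivity) (normI_sign_le k)
    have hsum2 : Summable fun ℓ : ℤ => v (k - ℓ) * (-Complex.I * ((Int.sign ℓ : ℤ) : ℂ) * derC f ℓ) := by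
      refine Summable.of_norm ?_
      refine Summable.of_nonneg_of_le (fun ℓ => norm_nonneg _) (fun ℓ => ?_) (hS0 k)
      have e : ‖v (k - ℓ)‖ * ‖derC f ℓ‖ = |(ℓ:ℝ)| * (‖v (k - ℓ)‖ * ‖f ℓ‖) := by
        rw [norm_derC]; ring
      calc ‖v (k - ℓ) * (-Complex.I * ((Int.sign ℓ : ℤ) : ℂ) * derC f ℓ)‖
          = ‖v (k - ℓ)‖ * (‖-Complex.I * ((Int.sign ℓ : ℤ) : ℂ)‖ * ‖derC f ℓ‖) := by
            rw [norm_mul, norm_mul]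
        _ ≤ ‖v (k - ℓ)‖ * (1 * ‖derC f ℓ‖) := by
            refine mul_le_mul_of_nonneg_left ?_ (norm_nonneg _)
            exact mul_le_mul_of_nonneg_right (normI_sign_le ℓ) (norm_nonneg _)
        _ = |(ℓ:ℝ)| * (‖v (k - ℓ)‖ * ‖f ℓ‖) := by rw [one_mul, e]
    unfold commH hilbC convC
    have e1 : -Complex.I * ((Int.sign k : ℤ) : ℂ) * (∑' ℓ : ℤ, v (k - ℓ) * derC f ℓ)
        = ∑' ℓ : ℤ, (-Complex.I * ((Int.sign k : ℤ) : ℂ)) * (v (k - ℓ) * derC f ℓ) := by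
      rw [tsum_mul_left]
    rw [e1, ← Summable.tsum_sub hsum1 hsum2]
    exact tsum_congr fun ℓ => by push_cast; ring
  -- the pointwise bound
  have hpt : ∀ k : ℤ, ‖commH v (derC f) k‖ ≤ ∑' ℓ : ℤ, 2 * (‖derC v (k - ℓ)‖ * ‖f ℓ‖) := by
    intro k
    rw [hkey k]
    have hnorm : ∀ ℓ : ℤ, ‖(-Complex.I) * ((Int.sign k - Int.sign ℓ : ℤ) : ℂ) * (v (k - ℓ) * derC f ℓ)‖
        ≤ 2 * (‖derC v (k - ℓ)‖ * ‖f ℓ‖) := by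
      intro ℓ
      have hb := sign_abs_bound_real k ℓ
      have h3 : (0:ℝ) ≤ ‖v (k-ℓ)‖ * ‖f ℓ‖ := by positivity
      calc ‖(-Complex.I) * ((Int.sign k - Int.sign ℓ : ℤ) : ℂ) * (v (k - ℓ) * derC f ℓ)‖
          = (|((Int.sign k - Int.sign ℓ : ℤ) : ℝ)| * |(ℓ:ℝ)|) * (‖v (k - ℓ)‖ * ‖f ℓ‖) := by
            rw [norm_mul, norm_mul, norm_mul, norm_neg, Complex.norm_I, one_mul,
              norm_int_cast_complex, norm_derC]
            ring
        _ ≤ (2 * |((k - ℓ : ℤ) : ℝ)|) * (‖v (k - ℓ)‖ * ‖f ℓ‖) :=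
            mul_le_mul_of_nonneg_right hb h3
        _ = 2 * (‖derC v (k - ℓ)‖ * ‖f ℓ‖) := by rw [norm_derC]; ring
    have hEsum : Summable fun ℓ : ℤ =>
        ‖(-Complex.I) * ((Int.sign k - Int.sign ℓ : ℤ) : ℂ) * (v (k - ℓ) * derC f ℓ)‖ := by
      refine Summable.of_nonneg_of_le (fun ℓ => norm_nonneg _) hnorm ?_
      exact (hDsum k).mul_left 2
    refine (norm_tsum_le_tsum_norm hEsum).trans ?_
    exact Summable.tsum_le_tsum hnorm hEsum ((hDsum k).mul_left 2)
  -- ENNReal setup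
  set a : ℤ → ENNReal := fun k => ENNReal.ofReal ‖derC v k‖ with hadef
  set b : ℤ → ENNReal := fun k => ENNReal.ofReal ‖f k‖ with hbdef
  set w : ℤ → ENNReal := fun k => ENNReal.ofReal (japow k σ) with hwdef
  set u : ℤ → ENNReal := fun k => ENNReal.ofReal (japow k (-σ)) with hudef
  set N1 : ENNReal := ∑' k : ℤ, a k with hN1def
  have hX : (∑' k : ℤ, (w k * a k) ^ (2:ℕ)) = ENNReal.ofReal Xr := by
    rw [hXrdef, ENNReal.ofReal_tsum_of_nonneg
      (fun k => mul_nonneg (japow_nonneg _ _) (sq_nonneg _)) hAσ]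
    refine tsum_congr fun k => ?_
    rw [hwdef, hadef, ← ENNReal.ofReal_mul (japow_nonneg _ _),
      ← ENNReal.ofReal_pow (mul_nonneg (japow_nonneg _ _) (norm_nonneg _)),
      mul_pow, japow_sq]
  have hY : (∑' k : ℤ, (b k) ^ (2:ℕ)) = ENNReal.ofReal Yr := by
    rw [hYrdef, ENNReal.ofReal_tsum_of_nonneg (fun k => by positivity) hf2]
    exact tsum_congr fun k => by rw [hbdef, ← ENNReal.ofReal_pow (norm_nonneg _)]
  have hS : (∑' k : ℤ, (u k) ^ (2:ℕ)) = ENNReal.ofReal Sr := by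
    rw [hSrdef, ENNReal.ofReal_tsum_of_nonneg (fun k => japow_nonneg _ _) hSsum]
    refine tsum_congr fun k => ?_
    rw [hudef, ← ENNReal.ofReal_pow (japow_nonneg _ _), japow_sq]
    norm_num
  -- step A : N1 ^ 2 ≤ S * X
  have hstepA : N1 ^ (2:ℕ) ≤ ENNReal.ofReal Sr * ENNReal.ofReal Xr := by
    rw [← hS, ← hX]
    have h1 : N1 = ∑' k : ℤ, u k * (w k * a k) := by
      rw [hN1def]
      refine tsum_congr fun k => ?_
      rw [hudef, hwdef, hadef, ← mul_assoc, ← ENNReal.ofReal_mul (japow_nonneg _ _), japow_add]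
      have : -σ + σ = 0 := by ring
      rw [this, japow_zero, ENNReal.ofReal_one, one_mul]
    rw [h1]
    exact cs_ennreal_sq u (fun k => w k * a k)
  -- step B : pointwise bound in ENNReal
  have hstepB : ∀ k : ℤ, ENNReal.ofReal ‖commH v (derC f) k‖ ≤ 2 * ∑' ℓ : ℤ, a (k - ℓ) * b ℓ := by
    intro k
    refine (ENNReal.ofReal_le_ofReal (hpt k)).trans ?_
    rw [ENNReal.ofReal_tsum_of_nonneg (fun ℓ => by positivity) ((hDsum k).mul_left 2)]
    rw [← ENNReal.tsum_mul_left]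
    refine le_of_eq (tsum_congr fun ℓ => ?_)
    rw [hadef, hbdef, ENNReal.ofReal_mul (by norm_num), ENNReal.ofReal_mul (norm_nonneg _),
      ENNReal.ofReal_ofNat]
  -- step C : Young's inequality per k
  have hstepC : ∀ k : ℤ, (∑' ℓ : ℤ, a (k - ℓ) * b ℓ) ^ (2:ℕ)
      ≤ N1 * ∑' ℓ : ℤ, a (k - ℓ) * (b ℓ) ^ (2:ℕ) := by
    intro k
    have h1 : (∑' ℓ : ℤ, a (k - ℓ) * b ℓ)
        = ∑' ℓ : ℤ, (a (k - ℓ)) ^ ((1:ℝ)/2) * ((a (k - ℓ)) ^ ((1:ℝ)/2) * b ℓ) := by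
      refine tsum_congr fun ℓ => ?_
      rw [← mul_assoc, ← ENNReal.rpow_add_of_nonneg _ _ (by norm_num) (by norm_num)]
      norm_num
    rw [h1]
    refine (cs_ennreal_sq _ _).trans (le_of_eq ?_)
    congr 1
    · calc (∑' ℓ : ℤ, ((a (k - ℓ)) ^ ((1:ℝ)/2)) ^ (2:ℕ))
          = ∑' ℓ : ℤ, a (k - ℓ) := tsum_congr fun ℓ => sq_half_ennreal _
        _ = N1 := by rw [hN1def]; exact (Equiv.subLeft k).tsum_eq a
    · refine tsum_congr fun ℓ => ?_
      rw [mul_pow, sq_half_ennreal]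
  -- step D : summing up
  have hstepD : (∑' k : ℤ, ENNReal.ofReal ‖commH v (derC f) k‖ ^ (2:ℕ))
      ≤ 4 * (ENNReal.ofReal Sr * ENNReal.ofReal Xr) * ENNReal.ofReal Yr := by
    have h1 : (∑' k : ℤ, ENNReal.ofReal ‖commH v (derC f) k‖ ^ (2:ℕ))
        ≤ ∑' k : ℤ, (2 * ∑' ℓ : ℤ, a (k - ℓ) * b ℓ) ^ (2:ℕ) :=
      ENNReal.tsum_le_tsum fun k => pow_le_pow_left₀ zero_le (hstepB k) 2
    have h2 : (∑' k : ℤ, (2 * ∑' ℓ : ℤ, a (k - ℓ) * b ℓ) ^ (2:ℕ))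
        ≤ ∑' k : ℤ, 4 * (N1 * ∑' ℓ : ℤ, a (k - ℓ) * (b ℓ) ^ (2:ℕ)) := by
      refine ENNReal.tsum_le_tsum fun k => ?_
      rw [mul_pow]
      have : (2:ENNReal) ^ (2:ℕ) = 4 := by norm_num
      rw [this]
      exact mul_le_mul_right (hstepC k) 4
    have h3 : (∑' k : ℤ, 4 * (N1 * ∑' ℓ : ℤ, a (k - ℓ) * (b ℓ) ^ (2:ℕ)))
        = 4 * N1 * ∑' k : ℤ, ∑' ℓ : ℤ, a (k - ℓ) * (b ℓ) ^ (2:ℕ) :=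
      calc (∑' k : ℤ, 4 * (N1 * ∑' ℓ : ℤ, a (k - ℓ) * (b ℓ) ^ (2:ℕ)))
          = ∑' k : ℤ, (4 * N1) * ∑' ℓ : ℤ, a (k - ℓ) * (b ℓ) ^ (2:ℕ) :=
            tsum_congr fun k => (mul_assoc 4 N1 _).symm
        _ = 4 * N1 * ∑' k : ℤ, ∑' ℓ : ℤ, a (k - ℓ) * (b ℓ) ^ (2:ℕ) := ENNReal.tsum_mul_left
    have h4 : (∑' k : ℤ, ∑' ℓ : ℤ, a (k - ℓ) * (b ℓ) ^ (2:ℕ)) = N1 * ENNReal.ofReal Yr := by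
      rw [ENNReal.tsum_comm]
      have h5 : ∀ ℓ : ℤ, (∑' k : ℤ, a (k - ℓ) * (b ℓ) ^ (2:ℕ)) = N1 * (b ℓ) ^ (2:ℕ) := by
        intro ℓ
        rw [ENNReal.tsum_mul_right, hN1def]
        congr 1
        exact (Equiv.subRight ℓ).tsum_eq a
      rw [tsum_congr h5, ENNReal.tsum_mul_left, hY]
    calc (∑' k : ℤ, ENNReal.ofReal ‖commH v (derC f) k‖ ^ (2:ℕ))
        ≤ ∑' k : ℤ, 4 * (N1 * ∑' ℓ : ℤ, a (k - ℓ) * (b ℓ) ^ (2:ℕ)) := h1.trans h2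
      _ = 4 * N1 * (N1 * ENNReal.ofReal Yr) := by rw [h3, h4]
      _ = 4 * (N1 * N1) * ENNReal.ofReal Yr := by ring
      _ ≤ 4 * (ENNReal.ofReal Sr * ENNReal.ofReal Xr) * ENNReal.ofReal Yr := by
          have : N1 * N1 = N1 ^ (2:ℕ) := by ring
          rw [this]
          exact mul_le_mul' (mul_le_mul_right hstepA 4) le_rfl
  -- extract the real inequality
  have hRHSne : (4 : ENNReal) * (ENNReal.ofReal Sr * ENNReal.ofReal Xr) * ENNReal.ofReal Yr ≠ ⊤ := by
    exact ENNReal.mul_ne_top (ENNReal.mul_ne_top (by norm_num)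
      (ENNReal.mul_ne_top ENNReal.ofReal_ne_top ENNReal.ofReal_ne_top)) ENNReal.ofReal_ne_top
  have hcoe : ∀ k : ℤ, ENNReal.ofReal ‖commH v (derC f) k‖ ^ (2:ℕ)
      = ((‖commH v (derC f) k‖₊ ^ (2:ℕ) : NNReal) : ENNReal) := by
    intro k
    rw [ofReal_norm, ENNReal.coe_pow, enorm_eq_nnnorm]
  have hZsum : Summable fun k : ℤ => ‖commH v (derC f) k‖₊ ^ (2:ℕ) := by
    rw [← ENNReal.tsum_coe_ne_top_iff_summable]
    refine ne_top_of_le_ne_top hRHSne ?_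
    refine le_trans (le_of_eq (tsum_congr fun k => (hcoe k).symm)) hstepD
  have hZsumR : Summable fun k : ℤ => ‖commH v (derC f) k‖ ^ 2 := by
    have := NNReal.summable_coe.mpr hZsum
    refine this.congr fun k => ?_
    push_cast
    rfl
  set Zr : ℝ := ∑' k : ℤ, ‖commH v (derC f) k‖ ^ 2 with hZrdef
  have hZr0 : 0 ≤ Zr := tsum_nonneg fun k => by positivity
  have hZle : Zr ≤ 4 * (Sr * Xr) * Yr := by
    have hofZ : ENNReal.ofReal Zr = ∑' k : ℤ, ENNReal.ofReal ‖commH v (derC f) k‖ ^ (2:ℕ) := by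
      rw [hZrdef, ENNReal.ofReal_tsum_of_nonneg (fun k => by positivity) hZsumR]
      exact tsum_congr fun k => by rw [← ENNReal.ofReal_pow (norm_nonneg _)]
    have h6 : ENNReal.ofReal Zr ≤ ENNReal.ofReal (4 * (Sr * Xr) * Yr) := by
      rw [hofZ]
      refine hstepD.trans (le_of_eq ?_)
      rw [ENNReal.ofReal_mul (by positivity), ENNReal.ofReal_mul (by norm_num),
        ENNReal.ofReal_mul hSr0]
      norm_num
    exact (ENNReal.ofReal_le_ofReal_iff (by positivity)).mp h6
  -- final arithmetic
  have hpi : (1:ℝ) ≤ 2 * Real.pi := by nlinarith [Real.pi_gt_three]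
  have hpi0 : (0:ℝ) ≤ 2 * Real.pi := by linarith
  have hC0 : (0:ℝ) ≤ 2 * Real.sqrt Sr + 1 := by positivity
  have hsq : Real.sqrt Sr ^ 2 = Sr := Real.sq_sqrt hSr0
  have hZnorm : hsNormSq 0 (commH v (derC f)) = 2 * Real.pi * Zr := by
    rw [hsNormSq, hZrdef]
    congr 1
    refine tsum_congr fun k => ?_
    rw [show (2:ℝ) * 0 = 0 by ring, japow_zero, one_mul]
  have hXnorm : hsNormSq σ (derC v) = 2 * Real.pi * Xr := rfl
  have hYnorm : hsNormSq 0 f = 2 * Real.pi * Yr := by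
    rw [hsNormSq, hYrdef]
    congr 1
    refine tsum_congr fun k => ?_
    rw [show (2:ℝ) * 0 = 0 by ring, japow_zero, one_mul]
  rw [hsNorm, hsNorm, hsNorm, hZnorm, hXnorm, hYnorm]
  have hmain : 2 * Real.pi * Zr
      ≤ (2 * Real.sqrt Sr + 1)^2 * ((2 * Real.pi * Xr) * (2 * Real.pi * Yr)) := by
    have h1 : 2 * Real.pi * Zr ≤ 2 * Real.pi * (4 * (Sr * Xr) * Yr) := by
      exact mul_le_mul_of_nonneg_left hZle hpi0
    have h2 : 4 * Sr ≤ (2 * Real.sqrt Sr + 1)^2 := by nlinarith [Real.sqrt_nonneg Sr]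
    have h3 : 2 * Real.pi * (4 * (Sr * Xr) * Yr)
        ≤ (2 * Real.sqrt Sr + 1)^2 * ((2 * Real.pi * Xr) * (2 * Real.pi * Yr)) := by
      have hXY : 0 ≤ Xr * Yr := mul_nonneg hXr0 hYr0
      nlinarith [mul_nonneg (mul_nonneg hpi0 hXY) (sub_nonneg.mpr h2),
        mul_nonneg hpi0 (mul_nonneg hXY (sub_nonneg.mpr hpi))]
    linarith
  calc Real.sqrt (2 * Real.pi * Zr)
      ≤ Real.sqrt ((2 * Real.sqrt Sr + 1)^2 * ((2 * Real.pi * Xr) * (2 * Real.pi * Yr))) :=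
        Real.sqrt_le_sqrt hmain
    _ = (2 * Real.sqrt Sr + 1) * Real.sqrt (2 * Real.pi * Xr) * Real.sqrt (2 * Real.pi * Yr) := by
        rw [Real.sqrt_mul (by positivity), Real.sqrt_mul (by positivity),
          Real.sqrt_sq hC0]
        ring
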